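/- Let G be a locally compact totally disconnected group, N a closed subgroup, and suppose a smooth representation of G restricted to N acts on S(C) (locally constant compactly supported functions on an ℓ-space C) by (n·φ)(c) = χ_c(n)φ(c) for characters χ_c of N. If for every c ∈ C the character n ↦ χ_c(n)ψ(n)⁻¹ is nontrivial on N (ψ a fixed character of N exhausted by its compact open subgroups), then the twisted Jacquet module J_{N,ψ}(S(C)) = S(C)/span{n·φ - ψ(n)φ} is zero. -/

import Mathlib

open Classical in
private lemma lc_piecewise {X : Type*} [TopologicalSpace X] {s : Set X}
    (hso : IsOpen s) (hsc : IsClosed s) {f g : X → ℂ}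
    (hf : IsLocallyConstant f) (hg : IsLocallyConstant g) :
    IsLocallyConstant (fun x => if x ∈ s then f x else g x) := by
  intro t
  have : (fun x => if x ∈ s then f x else g x) ⁻¹' t
      = (s ∩ f ⁻¹' t) ∪ (sᶜ ∩ g ⁻¹' t) := by
    ext x
    by_cases hx : x ∈ s <;> simp [hx]
  rw [this]
  exact (hso.inter (hf t)).union (hsc.isOpen_compl.inter (hg t))

/-- Twisted Jacquet module vanishing: if `N` (a locally compact totally disconnected group
exhausted by its compact open subgroups) acts on locally constant compactly supported functions
on an ℓ-space `C` by `(n · φ)(c) = χ_c(n) φ(c)`, and for every `c ∈ C` the character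
`n ↦ χ_c(n) ψ(n)⁻¹` is nontrivial, then `J_{N,ψ}(S(C)) = 0`, i.e. every element of `S(C)`
lies in the span of the elements `n · φ - ψ(n) φ`. -/
theorem twisted_jacquet_vanishing
    {N : Type*} [Group N] [TopologicalSpace N] [IsTopologicalGroup N]
    [LocallyCompactSpace N] [TotallyDisconnectedSpace N]
    {C : Type*} [TopologicalSpace C] [LocallyCompactSpace C] [TotallyDisconnectedSpace C]
    (hexh : ∀ K : Set N, IsCompact K →
      ∃ U : Subgroup N, IsOpen (U : Set N) ∧ IsCompact (U : Set N) ∧ K ⊆ (U : Set N))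
    (χ : C → (N →* ℂˣ)) (ψ : N →* ℂˣ)
    (hχc : ∀ n : N, IsLocallyConstant fun c : C => ((χ c n : ℂˣ) : ℂ))
    (hχn : ∀ c : C, Continuous fun n : N => ((χ c n : ℂˣ) : ℂ))
    (hnt : ∀ c : C, ∃ n : N, χ c n ≠ ψ n) :
    ∀ φ : C → ℂ, IsLocallyConstant φ → HasCompactSupport φ →
      φ ∈ Submodule.span ℂ {f : C → ℂ |
        ∃ (n : N) (φ' : C → ℂ), IsLocallyConstant φ' ∧ HasCompactSupport φ' ∧
          f = fun c => ((χ c n : ℂˣ) : ℂ) * φ' c - ((ψ n : ℂˣ) : ℂ) * φ' c} := by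
  classical
  set S : Set (C → ℂ) := {f : C → ℂ |
        ∃ (n : N) (φ' : C → ℂ), IsLocallyConstant φ' ∧ HasCompactSupport φ' ∧
          f = fun c => ((χ c n : ℂˣ) : ℂ) * φ' c - ((ψ n : ℂˣ) : ℂ) * φ' c} with hS
  -- key lemma: a function whose support sees only one "good" n is itself a generator
  have genA : ∀ (m : N) (φ : C → ℂ), IsLocallyConstant φ → HasCompactSupport φ →
      (∀ c : C, φ c ≠ 0 → ((χ c m : ℂˣ) : ℂ) ≠ ((ψ m : ℂˣ) : ℂ)) →
      φ ∈ Submodule.span ℂ S := by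
    intro m φ hlc hcs hgood
    apply Submodule.subset_span
    refine ⟨m, fun c => if ((χ c m : ℂˣ) : ℂ) = ((ψ m : ℂˣ) : ℂ) then 0
      else φ c / (((χ c m : ℂˣ) : ℂ) - ((ψ m : ℂˣ) : ℂ)), ?_, ?_, ?_⟩
    · exact (hlc.comp₂ (hχc m) fun x y => if y = ((ψ m : ℂˣ) : ℂ) then 0
        else x / (y - ((ψ m : ℂˣ) : ℂ)))
    · apply hcs.mono
      intro c hc
      simp only [Function.mem_support] at hc ⊢
      intro h0
      apply hc
      simp [h0]
    · funext c
      by_cases h : ((χ c m : ℂˣ) : ℂ) = ((ψ m : ℂˣ) : ℂ)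
      · have : φ c = 0 := by
          by_contra h0
          exact hgood c h0 h
        simp [h, this]
      · have hne : ((χ c m : ℂˣ) : ℂ) - ((ψ m : ℂˣ) : ℂ) ≠ 0 := sub_ne_zero.mpr h
        simp only [if_neg h]
        field_simp
  intro φ hlc hcs
  -- choose for each point a witness n and a clopen neighborhood
  have hm : ∀ c : C, ((χ c ((hnt c).choose) : ℂˣ) : ℂ) ≠ ((ψ ((hnt c).choose) : ℂˣ) : ℂ) :=
    fun c h => (hnt c).choose_spec (Units.ext h)
  set m : C → N := fun c => (hnt c).choose with hmdef
  set U : C → Set C := fun c =>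
    (fun c' => ((χ c' (m c) : ℂˣ) : ℂ)) ⁻¹' {((χ c (m c) : ℂˣ) : ℂ)} with hUdef
  have hUopen : ∀ c, IsOpen (U c) := fun c => (hχc (m c)) _
  have hUclosed : ∀ c, IsClosed (U c) := by
    intro c
    rw [← isOpen_compl_iff]
    have : (U c)ᶜ = (fun c' => ((χ c' (m c) : ℂˣ) : ℂ)) ⁻¹' {((χ c (m c) : ℂˣ) : ℂ)}ᶜ := by
      simp [hUdef, Set.preimage_compl]
    rw [this]
    exact (hχc (m c)) _
  have hmemU : ∀ c, c ∈ U c := fun c => rfl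
  -- induction on finite covers
  have aux : ∀ (t : Finset C) (φ : C → ℂ), IsLocallyConstant φ → HasCompactSupport φ →
      tsupport φ ⊆ ⋃ c ∈ t, U c → φ ∈ Submodule.span ℂ S := by
    intro t
    induction t using Finset.induction_on with
    | empty =>
      intro φ hlc hcs hsub
      have : φ = 0 := by
        funext c
        by_contra h
        have : c ∈ tsupport φ := subset_closure h
        simpa using hsub this
      rw [this]
      exact Submodule.zero_mem _
    | @insert a t ha IH =>
      intro φ hlc hcs hsub
      set φ₁ : C → ℂ := fun c => if c ∈ U a then φ c else 0 with hφ₁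
      set φ₂ : C → ℂ := fun c => if c ∈ U a then 0 else φ c with hφ₂
      have hlc₁ : IsLocallyConstant φ₁ := lc_piecewise (hUopen a) (hUclosed a) hlc
        (IsLocallyConstant.const 0)
      have hlc₂ : IsLocallyConstant φ₂ := lc_piecewise (hUopen a) (hUclosed a)
        (IsLocallyConstant.const 0) hlc
      have hcs₁ : HasCompactSupport φ₁ := by
        apply hcs.mono
        intro c hc
        simp only [Function.mem_support, hφ₁] at hc ⊢
        intro h; apply hc; simp [h]
      have hcs₂ : HasCompactSupport φ₂ := by
        apply hcs.mono
        intro c hc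
        simp only [Function.mem_support, hφ₂] at hc ⊢
        intro h; apply hc; simp [h]
      have h1 : φ₁ ∈ Submodule.span ℂ S := by
        apply genA (m a) φ₁ hlc₁ hcs₁
        intro c hc
        have hcU : c ∈ U a := by
          by_contra h
          simp [hφ₁, h] at hc
        have : ((χ c (m a) : ℂˣ) : ℂ) = ((χ a (m a) : ℂˣ) : ℂ) := hcU
        rw [this]
        exact hm a
      have h2 : φ₂ ∈ Submodule.span ℂ S := by
        apply IH φ₂ hlc₂ hcs₂
        intro c hc
        have hc' : c ∈ tsupport φ ∩ (U a)ᶜ := by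
          have hsupp : Function.support φ₂ ⊆ Function.support φ ∩ (U a)ᶜ := by
            intro x hx
            simp only [Function.mem_support, hφ₂] at hx
            by_cases h : x ∈ U a
            · simp [h] at hx
            · exact ⟨by simpa [h] using hx, h⟩
          have : tsupport φ₂ ⊆ tsupport φ ∩ (U a)ᶜ := by
            apply closure_minimal
            · exact hsupp.trans (Set.inter_subset_inter subset_closure (Set.Subset.refl _))
            · exact isClosed_closure.inter (hUopen a).isClosed_compl
          exact this hc
        obtain ⟨hc1, hc2⟩ := hc'
        have := hsub hc1
        simp only [Set.mem_iUnion, Finset.mem_insert] at this ⊢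
        obtain ⟨i, hi, hmem⟩ := this
        rcases hi with rfl | hi
        · exact absurd hmem hc2
        · exact ⟨i, hi, hmem⟩
      have : φ = φ₁ + φ₂ := by
        funext c
        by_cases h : c ∈ U a <;> simp [hφ₁, hφ₂, h]
      rw [this]
      exact Submodule.add_mem _ h1 h2

  obtain ⟨t, ht⟩ := hcs.elim_finite_subcover U hUopen
    (fun x _ => Set.mem_iUnion.mpr ⟨x, hmemU x⟩)
  exact aux t φ hlc hcs ht
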